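/- Let φ : H → ℂ be holomorphic with a simple zero at v ∈ H, and let f = 1 + ε|φ|² for ε > 0. Then at the point v, the real linearization of the Hamiltonian vector field X_{1/f} of 1/f with respect to ω = y⁻² dx∧dy, in the basis {∂_x, ∂_y}, equals [[0, 2ε v_y² |φ'(v)|²], [−2ε v_y² |φ'(v)|², 0]], where v_y = Im v; in particular the time-T flow of the linearization is a clockwise rotation by angle 2ε v_y² |φ'(v)|² T. -/

import Mathlib

/-- The Hamiltonian vector field of `1/f` with respect to `ω = y⁻² dx ∧ dy` on the upper
half-plane, viewed as a map `ℂ → ℂ`: `X_{1/f} = (−y² ∂_y(1/f), y² ∂_x(1/f))`. -/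
noncomputable def hamX (f : ℂ → ℝ) (z : ℂ) : ℂ :=
  ⟨-(z.im) ^ 2 * fderiv ℝ (fun w => (f w)⁻¹) z Complex.I,
    (z.im) ^ 2 * fderiv ℝ (fun w => (f w)⁻¹) z 1⟩

/-- Let `φ : H → ℂ` be holomorphic with a simple zero at `v`, and `f = 1 + ε|φ|²`, `ε > 0`.
Then the real linearization at `v` of the Hamiltonian vector field `X_{1/f}` is
`w ↦ (κ w_y, −κ w_x)` with `κ = 2ε (Im v)² |φ'(v)|²` (i.e. the matrix
`[[0, κ],[−κ, 0]]` in the basis `{∂_x, ∂_y}`); in particular the time-`T` flow of the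
linearization is the clockwise rotation by angle `κT`, `w ↦ e^{−iκt} w`. -/
theorem linearization_of_hamX (φ : ℂ → ℂ) (hφ : DifferentiableOn ℂ φ {z : ℂ | 0 < z.im})
    (v : ℂ) (hv : 0 < v.im) (hzero : φ v = 0) (hsimple : deriv φ v ≠ 0)
    (ε : ℝ) (hε : 0 < ε) :
    let f : ℂ → ℝ := fun z => 1 + ε * ‖φ z‖ ^ 2
    let κ : ℝ := 2 * ε * v.im ^ 2 * ‖deriv φ v‖ ^ 2
    (∀ w : ℂ, fderiv ℝ (hamX f) v w = (⟨κ * w.im, -(κ * w.re)⟩ : ℂ)) ∧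
      ∀ T : ℝ, ∀ w : ℂ,
        HasDerivAt (fun t : ℝ => Complex.exp (-((κ * t : ℝ) : ℂ) * Complex.I) * w)
          (fderiv ℝ (hamX f) v (Complex.exp (-((κ * T : ℝ) : ℂ) * Complex.I) * w)) T := by
  intro f κ
  have hUopen : IsOpen {z : ℂ | 0 < z.im} := isOpen_lt continuous_const Complex.continuous_im
  -- rewrite f in terms of re/im
  have hfeq : f = fun w => 1 + ε * ((φ w).re * (φ w).re + (φ w).im * (φ w).im) := by
    funext w
    show 1 + ε * ‖φ w‖ ^ 2 = _
    rw [Complex.sq_norm, Complex.normSq_apply]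
  have hfpos : ∀ z : ℂ, 0 < f z := by
    intro z
    have : (0:ℝ) ≤ ε * ‖φ z‖ ^ 2 := by positivity
    show 0 < 1 + ε * ‖φ z‖ ^ 2
    linarith
  -- the auxiliary holomorphic-flavoured formula for the Hamiltonian field
  set A : ℂ → ℂ := fun z =>
    ((-(2*ε) * z.im^2 * ((f z)^2)⁻¹ : ℝ) : ℂ) * (Complex.I * (starRingEnd ℂ) (deriv φ z))
    with hA
  set H : ℂ → ℂ := fun z => A z * φ z with hH
  -- Step A : hamX f = H on the upper half plane
  have stepA : ∀ z ∈ {z : ℂ | 0 < z.im}, hamX f z = H z := by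
    intro z hz
    have hdz : HasDerivAt φ (deriv φ z) z :=
      (hφ.differentiableAt (hUopen.mem_nhds hz)).hasDerivAt
    have hφR : HasFDerivAt φ
        ((ContinuousLinearMap.smulRight (1 : ℂ →L[ℂ] ℂ) (deriv φ z)).restrictScalars ℝ) z :=
      hdz.hasFDerivAt.restrictScalars ℝ
    have hP : HasFDerivAt (fun w => (φ w).re)
        (Complex.reCLM.comp ((ContinuousLinearMap.smulRight (1 : ℂ →L[ℂ] ℂ)
          (deriv φ z)).restrictScalars ℝ)) z := Complex.reCLM.hasFDerivAt.comp z hφR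
    have hQ : HasFDerivAt (fun w => (φ w).im)
        (Complex.imCLM.comp ((ContinuousLinearMap.smulRight (1 : ℂ →L[ℂ] ℂ)
          (deriv φ z)).restrictScalars ℝ)) z := Complex.imCLM.hasFDerivAt.comp z hφR
    have hF := (((hP.mul hP).add (hQ.mul hQ)).const_mul ε).const_add 1
    simp only [Pi.mul_apply, Pi.add_apply] at hF; rw [← hfeq] at hF
    have hg := (hasDerivAt_inv (hfpos z).ne').comp_hasFDerivAt z hF
    have hg' : HasFDerivAt (fun w => (f w)⁻¹)
        ((-(f z ^ 2)⁻¹ : ℝ) • (ε • ((φ z).re • (Complex.reCLM.comp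
            ((ContinuousLinearMap.smulRight (1 : ℂ →L[ℂ] ℂ) (deriv φ z)).restrictScalars ℝ)) +
          (φ z).re • (Complex.reCLM.comp ((ContinuousLinearMap.smulRight (1 : ℂ →L[ℂ] ℂ)
            (deriv φ z)).restrictScalars ℝ)) +
          ((φ z).im • (Complex.imCLM.comp ((ContinuousLinearMap.smulRight (1 : ℂ →L[ℂ] ℂ)
            (deriv φ z)).restrictScalars ℝ)) +
          (φ z).im • (Complex.imCLM.comp ((ContinuousLinearMap.smulRight (1 : ℂ →L[ℂ] ℂ)
            (deriv φ z)).restrictScalars ℝ)))))) z := hg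
    have hfd := hg'.fderiv
    show (⟨_, _⟩ : ℂ) = H z
    rw [hfd]
    simp only [hH, hA]
    generalize f z = F
    apply Complex.ext <;>
      simp only [ContinuousLinearMap.coe_smul', Pi.smul_apply, ContinuousLinearMap.add_apply,
        ContinuousLinearMap.coe_comp', Function.comp_apply, Complex.reCLM_apply,
        Complex.imCLM_apply, ContinuousLinearMap.coe_restrictScalars',
        ContinuousLinearMap.smulRight_apply, ContinuousLinearMap.one_apply, smul_eq_mul,
        Complex.mul_re, Complex.mul_im, Complex.ofReal_re, Complex.ofReal_im,
        Complex.I_re, Complex.I_im, Complex.conj_re, Complex.conj_im,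
        Complex.one_re, Complex.one_im] <;>
      ring
  -- Step B : fderiv agrees
  have stepB : fderiv ℝ (hamX f) v = fderiv ℝ H v := by
    apply Filter.EventuallyEq.fderiv_eq
    filter_upwards [hUopen.mem_nhds hv] with z hz using stepA z hz
  -- Step C : fderiv of H at v
  have hdv : HasDerivAt φ (deriv φ v) v :=
    (hφ.differentiableAt (hUopen.mem_nhds hv)).hasDerivAt
  have hφRv : HasFDerivAt φ
      ((ContinuousLinearMap.smulRight (1 : ℂ →L[ℂ] ℂ) (deriv φ v)).restrictScalars ℝ) v :=
    hdv.hasFDerivAt.restrictScalars ℝ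
  have hAd : DifferentiableAt ℝ A v := by
    have hfd : DifferentiableAt ℝ f v := by
      rw [hfeq]
      have h1 : DifferentiableAt ℝ (fun w => (φ w).re) v :=
        (Complex.reCLM.hasFDerivAt.comp v hφRv).differentiableAt
      have h2 : DifferentiableAt ℝ (fun w => (φ w).im) v :=
        (Complex.imCLM.hasFDerivAt.comp v hφRv).differentiableAt
      exact (((h1.mul h1).add (h2.mul h2)).const_mul ε).const_add 1
    have hco : DifferentiableAt ℝ (fun z : ℂ => (-(2*ε) * z.im^2 * ((f z)^2)⁻¹ : ℝ)) v := by
      have him : DifferentiableAt ℝ (fun z : ℂ => z.im) v :=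
        Complex.imCLM.hasFDerivAt.differentiableAt
      exact ((him.pow 2).const_mul (-(2*ε))).mul
        ((hfd.pow 2).inv (pow_pos (hfpos v) 2).ne')
    have hcoC : DifferentiableAt ℝ
        (fun z : ℂ => ((-(2*ε) * z.im^2 * ((f z)^2)⁻¹ : ℝ) : ℂ)) v :=
      Complex.ofRealCLM.hasFDerivAt.differentiableAt.comp v hco
    have hAnOn : AnalyticOnNhd ℂ φ {z : ℂ | 0 < z.im} := hφ.analyticOnNhd hUopen
    have hderiv : DifferentiableAt ℝ (deriv φ) v :=
      ((hAnOn.deriv v hv).differentiableAt).restrictScalars ℝ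
    have hconj : DifferentiableAt ℝ (fun z : ℂ => (starRingEnd ℂ) (deriv φ z)) v := by
      have := (Complex.conjCLE.differentiableAt (x := deriv φ v)).comp v hderiv
      exact this
    exact hcoC.mul ((differentiableAt_const Complex.I).mul hconj)
  have hHd : HasFDerivAt H (A v • ((ContinuousLinearMap.smulRight (1 : ℂ →L[ℂ] ℂ)
      (deriv φ v)).restrictScalars ℝ) + φ v • fderiv ℝ A v) v :=
    hAd.hasFDerivAt.mul hφRv
  have key : ∀ w : ℂ, fderiv ℝ (hamX f) v w = (⟨κ * w.im, -(κ * w.re)⟩ : ℂ) := by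
    intro w
    rw [stepB, hHd.fderiv]
    have hAv : A v = ((-(2*ε) * v.im^2 : ℝ) : ℂ) * (Complex.I * (starRingEnd ℂ) (deriv φ v)) := by
      have : f v = 1 := by show 1 + ε * ‖φ v‖ ^ 2 = 1; simp [hzero]
      simp [hA, this]
    rw [ContinuousLinearMap.add_apply, hzero, zero_smul, ContinuousLinearMap.zero_apply,
      add_zero, ContinuousLinearMap.coe_smul', Pi.smul_apply,
      ContinuousLinearMap.coe_restrictScalars',
      ContinuousLinearMap.smulRight_apply, ContinuousLinearMap.one_apply, hAv]
    have hκ : κ = 2 * ε * v.im ^ 2 * ((deriv φ v).re * (deriv φ v).re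
        + (deriv φ v).im * (deriv φ v).im) := by
      show (2 * ε * v.im ^ 2 * ‖deriv φ v‖ ^ 2 : ℝ) = _
      rw [Complex.sq_norm, Complex.normSq_apply]
    apply Complex.ext <;>
      simp only [hκ, smul_eq_mul, Complex.mul_re, Complex.mul_im, Complex.ofReal_re,
        Complex.ofReal_im, Complex.I_re, Complex.I_im, Complex.conj_re, Complex.conj_im] <;>
      ring
  refine ⟨key, ?_⟩
  intro T w
  rw [key]
  -- derivative of the rotation flow
  have hc : HasDerivAt (fun t : ℝ => Complex.exp (-((κ * t : ℝ) : ℂ) * Complex.I))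
      (-(κ:ℂ) * Complex.I * Complex.exp (-((κ * T : ℝ) : ℂ) * Complex.I)) T := by
    have h1 : HasDerivAt (fun z : ℂ => Complex.exp ((-(κ:ℂ) * Complex.I) * z))
        (Complex.exp ((-(κ:ℂ) * Complex.I) * (T:ℂ)) * ((-(κ:ℂ) * Complex.I) * 1)) (T:ℂ) :=
      ((hasDerivAt_id (T:ℂ)).const_mul (-(κ:ℂ) * Complex.I)).cexp
    have h2 := h1.comp_ofReal
    have hfun : (fun t : ℝ => Complex.exp ((-(κ:ℂ) * Complex.I) * (t:ℂ)))
        = fun t : ℝ => Complex.exp (-((κ * t : ℝ) : ℂ) * Complex.I) := by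
      funext t; congr 1; push_cast; ring
    rw [hfun] at h2
    convert h2 using 1
    have : (-(κ:ℂ) * Complex.I) * (T:ℂ) = -((κ * T : ℝ) : ℂ) * Complex.I := by
      push_cast; ring
    rw [this]; ring
  have := hc.mul_const w
  convert this using 1; rotate_left
  have hexp : ∀ E W : ℂ, (⟨κ * (E * W).im, -(κ * (E * W).re)⟩ : ℂ)
      = -(κ:ℂ) * Complex.I * E * W := by
    intro E W
    apply Complex.ext <;>
      simp only [Complex.mul_re, Complex.mul_im, Complex.ofReal_re, Complex.ofReal_im,
        Complex.I_re, Complex.I_im, Complex.neg_re, Complex.neg_im] <;>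
      ring
  exact hexp _ _
  rfl
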